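/- (Wells-type exact sequence for linear cycle sets) Let X be a linear cycle set, A an abelian group, and E = X ⊕_{f,g} A the central extension corresponding to a normalised 2-cocycle (f,g). Then there is an exact sequence 1 → Z¹_N(X;A) →ι Aut_A(E) →Ψ Aut(X) × Aut(A) →Θ H²_N(X;A), where Θ(φ,θ) = [f,g] − ^{(φ,θ)}[f,g], exactness at Aut(X)×Aut(A) means Im(Ψ) = Θ⁻¹{0}, and ι, Ψ are group homomorphisms with ι injective and Ker(Ψ) = Im(ι). -/

import Mathlib

/-- A (left) linear cycle set on an abelian group `X`. -/
structure LCS (X : Type*) [AddCommGroup X] where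
  dot : X → X → X
  bij : ∀ x, Function.Bijective (dot x)
  cyc : ∀ x y z, dot (dot x y) (dot x z) = dot (dot y x) (dot y z)
  dot_add : ∀ x y z, dot x (y + z) = dot x y + dot x z
  add_dot : ∀ x y z, dot (x + y) z = dot (dot x y) (dot x z)

/-- 2-cocycle conditions for a linear cycle set with coefficients in `A`. -/
def IsCocycle {X A : Type*} [AddCommGroup X] [AddCommGroup A] (L : LCS X)
    (f g : X → X → A) : Prop :=
  (∀ x y, g x y = g y x) ∧
  (∀ x y z, g x y + g (x + y) z = g y z + g x (y + z)) ∧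
  (∀ x y z, f (x + y) z = f (L.dot x y) (L.dot x z) + f x z) ∧
  (∀ x y z, f x (y + z) - f x y - f x z = g (L.dot x y) (L.dot x z) - g y z)

/-- Normalised 2-cocycles, as an additive subgroup of pairs of maps. -/
def Zn {X : Type*} [AddCommGroup X] (L : LCS X) (A : Type*) [AddCommGroup A] :
    AddSubgroup ((X → X → A) × (X → X → A)) where
  carrier := {p | IsCocycle L p.1 p.2 ∧ p.2 0 0 = 0}
  zero_mem' := by
    refine ⟨⟨?_, ?_, ?_, ?_⟩, ?_⟩ <;> intros <;> simp
  add_mem' := by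
    rintro p q ⟨⟨hp1, hp2, hp3, hp4⟩, hp5⟩ ⟨⟨hq1, hq2, hq3, hq4⟩, hq5⟩
    refine ⟨⟨?_, ?_, ?_, ?_⟩, ?_⟩ <;> intros <;>
      simp only [Prod.fst_add, Prod.snd_add, Pi.add_apply]
    · rw [hp1, hq1]
    · rw [show ∀ a b c d : A, a + b + (c + d) = (a + c) + (b + d) by intros; abel,
        hp2, hq2]; abel
    · rw [hp3, hq3]; abel
    · rw [show ∀ a b c d e h : A, a + b - (c + d) - (e + h) = (a - c - e) + (b - d - h)
        by intros; abel, hp4, hq4]; abel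
    · rw [hp5, hq5]; simp
  neg_mem' := by
    rintro p ⟨⟨hp1, hp2, hp3, hp4⟩, hp5⟩
    refine ⟨⟨?_, ?_, ?_, ?_⟩, ?_⟩ <;> intros <;>
      simp only [Prod.fst_neg, Prod.snd_neg, Pi.neg_apply]
    · rw [hp1]
    · rw [show ∀ a b : A, -a + -b = -(a + b) by intros; abel, hp2]; abel
    · rw [hp3]; abel
    · rw [show ∀ a b c : A, -a - -b - -c = -(a - b - c) by intros; abel, hp4]; abel
    · rw [hp5]; simp

/-- Normalised 2-coboundaries. -/
def Bn {X : Type*} [AddCommGroup X] (L : LCS X) (A : Type*) [AddCommGroup A] :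
    AddSubgroup ((X → X → A) × (X → X → A)) where
  carrier := {p | ∃ l : X → A, l 0 = 0 ∧ (∀ x y, p.1 x y = l (L.dot x y) - l y) ∧
      (∀ x y, p.2 x y = l (x + y) - l x - l y)}
  zero_mem' := ⟨0, by simp⟩
  add_mem' := by
    rintro p q ⟨l, hl0, hl1, hl2⟩ ⟨m, hm0, hm1, hm2⟩
    refine ⟨l + m, by simp [hl0, hm0], fun x y => ?_, fun x y => ?_⟩ <;>
      simp only [Prod.fst_add, Prod.snd_add, Pi.add_apply, hl1, hm1, hl2, hm2] <;> abel
  neg_mem' := by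
    rintro p ⟨l, hl0, hl1, hl2⟩
    refine ⟨-l, by simp [hl0], fun x y => ?_, fun x y => ?_⟩ <;>
      simp only [Prod.fst_neg, Prod.snd_neg, Pi.neg_apply, hl1, hl2] <;> abel

/-- The second normalised linear cycle set cohomology group. -/
abbrev H2N {X : Type*} [AddCommGroup X] (L : LCS X) (A : Type*) [AddCommGroup A] :=
  Zn L A ⧸ (Bn L A).addSubgroupOf (Zn L A)

/-- Symmetric group 2-cocycles of the abelian group `X` with trivial coefficients `A`. -/
def Zsym (X : Type*) [AddCommGroup X] (A : Type*) [AddCommGroup A] :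
    AddSubgroup (X → X → A) where
  carrier := {g | (∀ x y, g x y = g y x) ∧
      ∀ x y z, g x y + g (x + y) z = g y z + g x (y + z)}
  zero_mem' := by refine ⟨?_, ?_⟩ <;> intros <;> simp
  add_mem' := by
    rintro p q ⟨hp1, hp2⟩ ⟨hq1, hq2⟩
    refine ⟨?_, ?_⟩ <;> intros <;> simp only [Pi.add_apply]
    · rw [hp1, hq1]
    · rw [show ∀ a b c d : A, a + b + (c + d) = (a + c) + (b + d) by intros; abel,
        hp2, hq2]; abel
  neg_mem' := by
    rintro p ⟨hp1, hp2⟩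
    refine ⟨?_, ?_⟩ <;> intros <;> simp only [Pi.neg_apply]
    · rw [hp1]
    · rw [show ∀ a b : A, -a + -b = -(a + b) by intros; abel, hp2]; abel

/-- Symmetric group 2-coboundaries. -/
def Bsym (X : Type*) [AddCommGroup X] (A : Type*) [AddCommGroup A] :
    AddSubgroup (X → X → A) where
  carrier := {g | ∃ l : X → A, ∀ x y, g x y = l (x + y) - l x - l y}
  zero_mem' := ⟨0, by simp⟩
  add_mem' := by
    rintro p q ⟨l, hl⟩ ⟨m, hm⟩
    exact ⟨l + m, fun x y => by simp only [Pi.add_apply, hl, hm]; abel⟩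
  neg_mem' := by
    rintro p ⟨l, hl⟩
    exact ⟨-l, fun x y => by simp only [Pi.neg_apply, hl]; abel⟩

/-- The second symmetric cohomology group of an abelian group. -/
abbrev H2sym (X : Type*) [AddCommGroup X] (A : Type*) [AddCommGroup A] :=
  Zsym X A ⧸ (Bsym X A).addSubgroupOf (Zsym X A)

/-- The multiplicative group structure that `AddAut` carried in the older Mathlib. -/
instance AddAut.groupOld (M : Type*) [Add M] : Group (AddAut M) where
  mul g h := AddEquiv.trans h g
  one := AddEquiv.refl _
  inv := AddEquiv.symm
  mul_assoc _ _ _ := rfl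
  one_mul _ := rfl
  mul_one _ := rfl
  inv_mul_cancel := AddEquiv.self_trans_symm

@[simp]
theorem AddAut.mul_apply_old {M : Type*} [Add M] (e₁ e₂ : AddAut M) (m : M) :
    (e₁ * e₂) m = e₁ (e₂ m) := rfl

@[simp]
theorem AddAut.one_apply_old {M : Type*} [Add M] (m : M) : (1 : AddAut M) m = m := rfl

@[simp]
theorem AddAut.inv_apply_self_old {M : Type*} [Add M] (e : AddAut M) (m : M) :
    e⁻¹ (e m) = m := AddEquiv.symm_apply_apply _ _

@[simp]
theorem AddAut.apply_inv_self_old {M : Type*} [Add M] (e : AddAut M) (m : M) :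
    e (e⁻¹ m) = m := AddEquiv.apply_symm_apply _ _

/-- Linear cycle set automorphisms, as a subgroup of the additive automorphisms. -/
def LCSAut {X : Type*} [AddCommGroup X] (L : LCS X) : Subgroup (AddAut X) where
  carrier := {φ | ∀ x y, φ (L.dot x y) = L.dot (φ x) (φ y)}
  one_mem' := by intro x y; rfl
  mul_mem' := by
    intro a b ha hb x y
    simp only [AddAut.mul_apply_old]
    rw [hb x y, ha]
  inv_mem' := by
    intro a ha x y
    apply a.injective
    rw [ha]
    simp

/-- The transported pair of maps under a pair of automorphisms. -/
def transport {X A : Type*} [AddCommGroup X] [AddCommGroup A]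
    (φ : AddAut X) (θ : AddAut A) (p : (X → X → A) × (X → X → A)) :
    (X → X → A) × (X → X → A) :=
  (fun x y => θ (p.1 (φ⁻¹ x) (φ⁻¹ y)), fun x y => θ (p.2 (φ⁻¹ x) (φ⁻¹ y)))

/-- Addition on the extension `X ⊕_{f,g} A`. -/
def addE {X A : Type*} [AddCommGroup X] [AddCommGroup A] (g : X → X → A)
    (p q : X × A) : X × A :=
  (p.1 + q.1, p.2 + q.2 + g p.1 q.1)

/-- Cycle set operation on the extension `X ⊕_{f,g} A`. -/
def dotE {X A : Type*} [AddCommGroup X] [AddCommGroup A] (L : LCS X) (f : X → X → A)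
    (p q : X × A) : X × A :=
  (L.dot p.1 q.1, q.2 + f p.1 q.1)

/-- Normalised 1-cocycles. -/
def Z1 {X : Type*} [AddCommGroup X] (L : LCS X) (A : Type*) [AddCommGroup A] :
    AddSubgroup (X → A) where
  carrier := {l | (∀ x y, l (x + y) = l x + l y) ∧ ∀ x y, l (L.dot x y) = l y}
  zero_mem' := by refine ⟨?_, ?_⟩ <;> intros <;> simp
  add_mem' := by
    rintro p q ⟨hp1, hp2⟩ ⟨hq1, hq2⟩
    refine ⟨?_, ?_⟩ <;> intros <;> simp only [Pi.add_apply, hp1, hq1, hp2, hq2] <;> abel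
  neg_mem' := by
    rintro p ⟨hp1, hp2⟩
    refine ⟨?_, ?_⟩ <;> intros <;> simp only [Pi.neg_apply, hp1, hp2] <;> abel

theorem Equiv.Perm.apply_inv_self_old {α : Type*} (e : Equiv.Perm α) (x : α) : e (e⁻¹ x) = x :=
  Equiv.apply_symm_apply _ _

/-- The subgroup `Aut_A(E)` of the permutation group of `E = X ⊕_{f,g} A`. -/
def AutAE {X A : Type*} [AddCommGroup X] [AddCommGroup A] (L : LCS X)
    (f g : X → X → A) : Subgroup (Equiv.Perm (X × A)) where
  carrier := {ψ | (∀ p q, ψ (addE g p q) = addE g (ψ p) (ψ q)) ∧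
      (∀ p q, ψ (dotE L f p q) = dotE L f (ψ p) (ψ q)) ∧
      ∃ φ ∈ LCSAut L, ∃ θ : AddAut A, ∃ l : X → A, ∀ x a, ψ (x, a) = (φ x, l x + θ a)}
  one_mem' := by
    refine ⟨fun p q => rfl, fun p q => rfl, 1, one_mem _, 1, 0, fun x a => by simp⟩
  mul_mem' := by
    rintro a b ⟨ha1, ha2, φa, hφa, θa, la, ha3⟩ ⟨hb1, hb2, φb, hφb, θb, lb, hb3⟩
    refine ⟨fun p q => ?_, fun p q => ?_, φa * φb, mul_mem hφa hφb, θa * θb,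
      fun x => la (φb x) + θa (lb x), fun x a => ?_⟩
    · simp only [Equiv.Perm.mul_apply, hb1, ha1]
    · simp only [Equiv.Perm.mul_apply, hb2, ha2]
    · simp only [Equiv.Perm.mul_apply, hb3, ha3, AddAut.mul_apply_old, map_add]
      abel_nf
  inv_mem' := by
    rintro ψ ⟨h1, h2, φ, hφ, θ, l, h3⟩
    refine ⟨fun p q => ?_, fun p q => ?_, φ⁻¹, inv_mem hφ, θ⁻¹,
      fun x => -θ⁻¹ (l (φ⁻¹ x)), fun x a => ?_⟩
    · apply ψ.injective
      simp only [Equiv.Perm.apply_inv_self_old, h1, Equiv.Perm.apply_inv_self_old]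
    · apply ψ.injective
      simp only [Equiv.Perm.apply_inv_self_old, h2, Equiv.Perm.apply_inv_self_old]
    · apply ψ.injective
      rw [Equiv.Perm.apply_inv_self_old, h3]
      simp

/-- A predicate packaging the linear cycle set axioms for a pair of binary operations. -/
structure IsLCSOps {Y : Type*} (add : Y → Y → Y) (dot : Y → Y → Y) : Prop where
  add_assoc : ∀ a b c, add (add a b) c = add a (add b c)
  add_comm : ∀ a b, add a b = add b a
  zero_exists : ∃ e, (∀ a, add e a = a) ∧ ∀ a, ∃ b, add a b = e
  bij : ∀ a, Function.Bijective (dot a)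
  cyc : ∀ a b c, dot (dot a b) (dot a c) = dot (dot b a) (dot b c)
  dot_add : ∀ a b c, dot a (add b c) = add (dot a b) (dot a c)
  add_dot : ∀ a b c, dot (add a b) c = dot (dot a b) (dot a c)

/-- The trivial linear cycle set on an abelian group. -/
def trivLCS (X : Type*) [AddCommGroup X] : LCS X where
  dot := fun _ y => y
  bij := fun _ => Function.bijective_id
  cyc := fun _ _ _ => rfl
  dot_add := fun _ _ _ => rfl
  add_dot := fun _ _ _ => rfl

namespace WellsAux

variable {X A : Type*} [AddCommGroup X] [AddCommGroup A]

/-- shear permutation -/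
def shear (φ : AddAut X) (θ : AddAut A) (l : X → A) : Equiv.Perm (X × A) where
  toFun p := (φ p.1, l p.1 + θ p.2)
  invFun p := (φ⁻¹ p.1, θ⁻¹ (p.2 - l (φ⁻¹ p.1)))
  left_inv p := by simp [add_sub_cancel_left]
  right_inv p := by simp [add_sub_cancel]

@[simp] lemma shear_apply (φ : AddAut X) (θ : AddAut A) (l : X → A) (x : X) (a : A) :
    shear φ θ l (x, a) = (φ x, l x + θ a) := rfl

variable (L : LCS X) (f g : X → X → A)

lemma autAE_spec (ψ : AutAE L f g) :
    ∃ φ ∈ LCSAut L, ∃ θ : AddAut A, ∃ l : X → A,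
      ∀ x a, (ψ : Equiv.Perm (X × A)) (x, a) = (φ x, l x + θ a) := ψ.2.2.2

lemma spec_unique {ψ : Equiv.Perm (X × A)} {φ φ' : AddAut X} {θ θ' : AddAut A}
    {l l' : X → A}
    (h : ∀ x a, ψ (x, a) = (φ x, l x + θ a))
    (h' : ∀ x a, ψ (x, a) = (φ' x, l' x + θ' a)) : φ = φ' ∧ θ = θ' := by
  constructor
  · ext x
    have := (h x 0).symm.trans (h' x 0)
    exact congrArg Prod.fst this
  · ext a
    have h0 := congrArg Prod.snd ((h 0 0).symm.trans (h' 0 0))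
    have ha := congrArg Prod.snd ((h 0 a).symm.trans (h' 0 a))
    simp only [map_zero, add_zero] at h0 ha
    rw [h0] at ha
    exact add_left_cancel ha

noncomputable def psi0 (ψ : AutAE L f g) : ↥(LCSAut L) × AddAut A :=
  (⟨(autAE_spec L f g ψ).choose, (autAE_spec L f g ψ).choose_spec.1⟩,
   (autAE_spec L f g ψ).choose_spec.2.choose)

lemma psi0_spec (ψ : AutAE L f g) :
    ∃ l : X → A, ∀ x a, (ψ : Equiv.Perm (X × A)) (x, a) =
      (((psi0 L f g ψ).1 : AddAut X) x, l x + (psi0 L f g ψ).2 a) :=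
  ⟨(autAE_spec L f g ψ).choose_spec.2.choose_spec.choose,
   (autAE_spec L f g ψ).choose_spec.2.choose_spec.choose_spec⟩

lemma psi0_eq (ψ : AutAE L f g) (φ : AddAut X) (hφ : φ ∈ LCSAut L) (θ : AddAut A)
    (l : X → A) (h : ∀ x a, (ψ : Equiv.Perm (X × A)) (x, a) = (φ x, l x + θ a)) :
    psi0 L f g ψ = (⟨φ, hφ⟩, θ) := by
  obtain ⟨l', h'⟩ := psi0_spec L f g ψ
  obtain ⟨h1, h2⟩ := spec_unique h' h
  exact Prod.ext (Subtype.ext h1) h2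

noncomputable def Psi : AutAE L f g →* ↥(LCSAut L) × AddAut A where
  toFun := psi0 L f g
  map_one' := psi0_eq L f g 1 1 (one_mem _) 1 0 (fun x a => by simp)
  map_mul' := by
    intro ψ₁ ψ₂
    obtain ⟨l₁, h₁⟩ := psi0_spec L f g ψ₁
    obtain ⟨l₂, h₂⟩ := psi0_spec L f g ψ₂
    refine psi0_eq L f g (ψ₁ * ψ₂) _ (mul_mem (psi0 L f g ψ₁).1.2 (psi0 L f g ψ₂).1.2)
      _ (fun x => l₁ (((psi0 L f g ψ₂).1 : AddAut X) x) + ((psi0 L f g ψ₁).2) (l₂ x))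
      (fun x a => ?_)
    have : ((ψ₁ * ψ₂ : AutAE L f g) : Equiv.Perm (X × A)) (x, a)
        = (ψ₁ : Equiv.Perm (X × A)) ((ψ₂ : Equiv.Perm (X × A)) (x, a)) := rfl
    rw [this, h₂, h₁]
    simp [map_add, add_assoc]

end WellsAux

namespace WellsAux

variable {X A : Type*} [AddCommGroup X] [AddCommGroup A]

lemma rearr {a b c d : A} (h : a + b = c + d) : d - b = a - c := by
  rw [eq_sub_of_add_eq h]; abel

lemma rearr2 {a b c d e : A} (h : a + b = c + d + e) : e - b = a - c - d := by
  rw [eq_sub_of_add_eq h]; abel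

lemma unrearr {s u e b : A} (h : e - b = s - u) : s + b = u + e := by
  have h2 : s - u = e - b := h.symm
  calc s + b = (s - u) + u + b := by abel
    _ = (e - b) + u + b := by rw [h2]
    _ = u + e := by abel

lemma unrearr2 {s u v e b : A} (h : e - b = s - u - v) : s + b = u + v + e := by
  have h2 : s - u - v = e - b := h.symm
  calc s + b = (s - u - v) + (u + v) + b := by abel
    _ = (e - b) + (u + v) + b := by rw [h2]
    _ = u + v + e := by abel

variable (L : LCS X) (f g : X → X → A)

lemma transport_mem (hfg : (f, g) ∈ Zn L A) (φ : AddAut X) (hφ : φ ∈ LCSAut L)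
    (θ : AddAut A) : transport φ θ (f, g) ∈ Zn L A := by
  have c1 : ∀ x y, g x y = g y x := hfg.1.1
  have c2 : ∀ x y z, g x y + g (x + y) z = g y z + g x (y + z) := hfg.1.2.1
  have c3 : ∀ x y z, f (x + y) z = f (L.dot x y) (L.dot x z) + f x z := hfg.1.2.2.1
  have c4 : ∀ x y z, f x (y + z) - f x y - f x z
      = g (L.dot x y) (L.dot x z) - g y z := hfg.1.2.2.2
  have c5 : g 0 0 = 0 := hfg.2
  have hφi : ∀ x y, (φ⁻¹ : AddAut X) (L.dot x y) = L.dot (φ⁻¹ x) (φ⁻¹ y) :=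
    inv_mem hφ
  refine ⟨⟨?_, ?_, ?_, ?_⟩, ?_⟩
  · intro x y; simp only [transport]; rw [c1]
  · intro x y z
    simp only [transport, map_add]
    rw [← map_add θ, ← map_add θ, c2]
  · intro x y z
    simp only [transport, map_add, hφi]
    rw [c3, map_add θ]
  · intro x y z
    simp only [transport, map_add, hφi]
    rw [← map_sub θ, ← map_sub θ, c4, map_sub]
  · simp only [transport, map_zero, c5]

def Theta (hfg : (f, g) ∈ Zn L A) (p : ↥(LCSAut L) × AddAut A) : H2N L A :=
  QuotientAddGroup.mk (⟨(f, g), hfg⟩ : Zn L A) -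
  QuotientAddGroup.mk (⟨transport (p.1 : AddAut X) p.2 (f, g),
    transport_mem L f g hfg (p.1 : AddAut X) p.1.2 p.2⟩ : Zn L A)

lemma theta_eq_zero_iff (hfg : (f, g) ∈ Zn L A) (p : ↥(LCSAut L) × AddAut A) :
    Theta L f g hfg p = 0 ↔
      ((f, g) - transport (p.1 : AddAut X) p.2 (f, g)) ∈ Bn L A := by
  rw [Theta, ← QuotientAddGroup.mk_sub, QuotientAddGroup.eq_zero_iff,
    AddSubgroup.mem_addSubgroupOf]
  rfl

lemma mem_shear (l : X → A) (hl1 : ∀ x y, l (x + y) = l x + l y)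
    (hl2 : ∀ x y, l (L.dot x y) = l y) :
    shear (1 : AddAut X) (1 : AddAut A) l ∈ AutAE L f g := by
  refine ⟨fun p q => ?_, fun p q => ?_, 1, one_mem _, 1, l, fun x a => rfl⟩
  · show shear 1 1 l (addE g p q) = addE g (shear 1 1 l p) (shear 1 1 l q)
    simp only [shear, addE, Equiv.coe_fn_mk, AddAut.one_apply_old, Prod.mk.injEq, true_and]
    rw [hl1]; abel
  · show shear 1 1 l (dotE L f p q) = dotE L f (shear 1 1 l p) (shear 1 1 l q)
    simp only [shear, dotE, Equiv.coe_fn_mk, AddAut.one_apply_old, Prod.mk.injEq, true_and]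
    rw [hl2]; abel

def iota : Multiplicative (↥(Z1 L A)) →* AutAE L f g where
  toFun l := ⟨shear 1 1 ((l.toAdd : X → A)),
    mem_shear L f g _ l.toAdd.2.1 l.toAdd.2.2⟩
  map_one' := by
    apply Subtype.ext; apply Equiv.ext; rintro ⟨x, a⟩
    simp [shear]
  map_mul' := by
    intro a b
    apply Subtype.ext; apply Equiv.ext; rintro ⟨x, c⟩
    show shear 1 1 _ (x, c) = shear 1 1 _ (shear 1 1 _ (x, c))
    simp [shear, add_assoc]

@[simp] lemma iota_apply (l : Multiplicative (↥(Z1 L A))) (x : X) (a : A) :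
    ((iota L f g l : AutAE L f g) : Equiv.Perm (X × A)) (x, a) =
      (x, (l.toAdd : X → A) x + a) := by
  show shear 1 1 _ (x, a) = _
  simp [shear]

end WellsAux
/-- the Wells type exact sequence for linear cycle sets -/
theorem wells_exact_sequence {X A : Type*} [AddCommGroup X] [AddCommGroup A]
    (L : LCS X) (f g : X → X → A) (hfg : (f, g) ∈ Zn L A) :
    ∃ (ι : Multiplicative (Z1 L A) →* AutAE L f g)
      (Ψ : AutAE L f g →* ↥(LCSAut L) × AddAut A)
      (Θ : ↥(LCSAut L) × AddAut A → H2N L A),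
      Function.Injective ι ∧
      (∀ l : Z1 L A, ∀ x a,
        ((ι (Multiplicative.ofAdd l) : Equiv.Perm (X × A))) (x, a) =
          (x, (l : X → A) x + a)) ∧
      (∀ (ψ : AutAE L f g) (φ : AddAut X) (hφ : φ ∈ LCSAut L) (θ : AddAut A)
          (l : X → A),
        (∀ x a, (ψ : Equiv.Perm (X × A)) (x, a) = (φ x, l x + θ a)) →
          Ψ ψ = (⟨φ, hφ⟩, θ)) ∧
      (∀ (φ : LCSAut L) (θ : AddAut A)
          (ht : transport (φ : AddAut X) θ (f, g) ∈ Zn L A),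
        Θ (φ, θ) = (QuotientAddGroup.mk (⟨(f, g), hfg⟩ : Zn L A) : H2N L A) -
          QuotientAddGroup.mk (⟨transport (φ : AddAut X) θ (f, g), ht⟩ : Zn L A)) ∧
      ι.range = Ψ.ker ∧
      Set.range Ψ = Θ ⁻¹' {0} := by
  classical
  refine ⟨WellsAux.iota L f g, WellsAux.Psi L f g, WellsAux.Theta L f g hfg,
    ?_, ?_, ?_, ?_, ?_, ?_⟩
  · -- injectivity of iota
    intro a b h
    have h' : ∀ x : X, (a.toAdd : X → A) x = (b.toAdd : X → A) x := by
      intro x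
      have h2 := congrArg
        (fun ψ : AutAE L f g => ((ψ : Equiv.Perm (X × A)) (x, 0)).2) h
      simpa using h2
    exact Multiplicative.toAdd.injective (Subtype.ext (funext h'))
  · -- formula for iota
    intro l x a
    simp
  · -- formula for Psi
    intro ψ φ hφ θ l h
    exact WellsAux.psi0_eq L f g ψ φ hφ θ l h
  · -- formula for Theta
    intro φ θ ht
    rfl
  · -- exactness at AutAE
    ext ψ
    simp only [MonoidHom.mem_range, MonoidHom.mem_ker]
    constructor
    · rintro ⟨l, rfl⟩
      exact WellsAux.psi0_eq L f g _ 1 (one_mem _) 1 ((l.toAdd : X → A))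
        (fun x a => by simp)
    · intro h
      obtain ⟨l, hl⟩ := WellsAux.psi0_spec L f g ψ
      have h' : WellsAux.psi0 L f g ψ = 1 := h
      rw [h'] at hl
      simp only [Prod.fst_one, Prod.snd_one, OneMemClass.coe_one,
        AddAut.one_apply_old] at hl
      have hadd := ψ.2.1
      have hdot := ψ.2.2.1
      have hladd : ∀ x y, l (x + y) = l x + l y := by
        intro x y
        have h2 := hadd (x, 0) (y, 0)
        simp only [addE, hl, add_zero, zero_add] at h2
        have h3 := congrArg Prod.snd h2
        exact add_right_cancel h3
      have hldot : ∀ x y, l (L.dot x y) = l y := by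
        intro x y
        have h2 := hdot (x, 0) (y, 0)
        simp only [dotE, hl, add_zero, zero_add] at h2
        have h3 := congrArg Prod.snd h2
        exact add_right_cancel h3
      refine ⟨Multiplicative.ofAdd ⟨l, hladd, hldot⟩, ?_⟩
      apply Subtype.ext; apply Equiv.ext; rintro ⟨x, a⟩
      rw [hl]
      simp
  · -- exactness at Aut(X) × Aut(A)
    ext p
    simp only [Set.mem_range, Set.mem_preimage, Set.mem_singleton_iff]
    constructor
    · rintro ⟨ψ, rfl⟩
      rw [WellsAux.theta_eq_zero_iff]
      obtain ⟨l, hl⟩ := WellsAux.psi0_spec L f g ψ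
      have hφmem : ((WellsAux.psi0 L f g ψ).1 : AddAut X) ∈ LCSAut L :=
        (WellsAux.psi0 L f g ψ).1.2
      set φ : AddAut X := ((WellsAux.psi0 L f g ψ).1 : AddAut X) with hφdef
      set θ : AddAut A := (WellsAux.psi0 L f g ψ).2 with hθdef
      have hadd := ψ.2.1
      have hdot := ψ.2.2.1
      have key1 : ∀ u v, l (u + v) + θ (g u v) = l u + l v + g (φ u) (φ v) := by
        intro u v
        have h2 := hadd (u, 0) (v, 0)
        simp only [addE, hl, map_zero, add_zero, zero_add] at h2
        exact congrArg Prod.snd h2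
      have key2 : ∀ u v, l (L.dot u v) + θ (f u v) = l v + f (φ u) (φ v) := by
        intro u v
        have h2 := hdot (u, 0) (v, 0)
        simp only [dotE, hl, map_zero, add_zero, zero_add] at h2
        exact congrArg Prod.snd h2
      have hl0 : l 0 = 0 := by
        have c5 : g 0 0 = 0 := hfg.2
        have h3 := key1 0 0
        simp only [zero_add, add_zero, map_zero, c5] at h3
        exact left_eq_add.mp h3
      have hφi : ∀ x y, (φ⁻¹ : AddAut X) (L.dot x y) = L.dot (φ⁻¹ x) (φ⁻¹ y) :=
        inv_mem hφmem
      refine ⟨fun x => l (φ⁻¹ x), by simp [hl0], fun x y => ?_, fun x y => ?_⟩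
      · show f x y - θ (f (φ⁻¹ x) (φ⁻¹ y)) = l (φ⁻¹ (L.dot x y)) - l (φ⁻¹ y)
        have h2 := key2 (φ⁻¹ x) (φ⁻¹ y)
        rw [AddAut.apply_inv_self_old, AddAut.apply_inv_self_old, ← hφi] at h2
        exact WellsAux.rearr h2
      · show g x y - θ (g (φ⁻¹ x) (φ⁻¹ y))
            = l (φ⁻¹ (x + y)) - l (φ⁻¹ x) - l (φ⁻¹ y)
        have h2 := key1 (φ⁻¹ x) (φ⁻¹ y)
        rw [AddAut.apply_inv_self_old, AddAut.apply_inv_self_old, ← map_add φ⁻¹] at h2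
        exact WellsAux.rearr2 h2
    · intro h0
      rw [WellsAux.theta_eq_zero_iff] at h0
      obtain ⟨l, hl0, hl1, hl2⟩ := h0
      set φ : AddAut X := (p.1 : AddAut X) with hφdef
      set θ : AddAut A := p.2 with hθdef
      have hl1' : ∀ x y, f x y - θ (f (φ⁻¹ x) (φ⁻¹ y)) = l (L.dot x y) - l y := hl1
      have hl2' : ∀ x y, g x y - θ (g (φ⁻¹ x) (φ⁻¹ y))
          = l (x + y) - l x - l y := hl2
      have hφmem : φ ∈ LCSAut L := p.1.2
      have hφ : ∀ x y, φ (L.dot x y) = L.dot (φ x) (φ y) := hφmem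
      have hmem : WellsAux.shear φ θ (fun x => l (φ x)) ∈ AutAE L f g := by
        refine ⟨fun u v => ?_, fun u v => ?_, φ, hφmem, θ, (fun x => l (φ x)),
          fun x a => rfl⟩
        · rcases u with ⟨x, a⟩; rcases v with ⟨y, b⟩
          refine Prod.ext_iff.mpr ⟨map_add φ x y, ?_⟩
          show l (φ (x + y)) + θ (a + b + g x y)
              = (l (φ x) + θ a) + (l (φ y) + θ b) + g (φ x) (φ y)
          have h2 := hl2' (φ x) (φ y)
          rw [AddAut.inv_apply_self_old, AddAut.inv_apply_self_old, ← map_add φ] at h2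
          have h3 := WellsAux.unrearr2 h2
          rw [map_add θ, map_add θ]
          calc l (φ (x + y)) + (θ a + θ b + θ (g x y))
              = (l (φ (x + y)) + θ (g x y)) + (θ a + θ b) := by abel
            _ = (l (φ x) + l (φ y) + g (φ x) (φ y)) + (θ a + θ b) := by rw [h3]
            _ = (l (φ x) + θ a) + (l (φ y) + θ b) + g (φ x) (φ y) := by abel
        · rcases u with ⟨x, a⟩; rcases v with ⟨y, b⟩
          refine Prod.ext_iff.mpr ⟨hφ x y, ?_⟩
          show l (φ (L.dot x y)) + θ (b + f x y)
              = (l (φ y) + θ b) + f (φ x) (φ y)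
          have h2 := hl1' (φ x) (φ y)
          rw [AddAut.inv_apply_self_old, AddAut.inv_apply_self_old, ← hφ] at h2
          have h3 := WellsAux.unrearr h2
          rw [map_add θ]
          calc l (φ (L.dot x y)) + (θ b + θ (f x y))
              = (l (φ (L.dot x y)) + θ (f x y)) + θ b := by abel
            _ = (l (φ y) + f (φ x) (φ y)) + θ b := by rw [h3]
            _ = (l (φ y) + θ b) + f (φ x) (φ y) := by abel
      refine ⟨⟨WellsAux.shear φ θ (fun x => l (φ x)), hmem⟩, ?_⟩
      exact WellsAux.psi0_eq L f g ⟨_, hmem⟩ φ hφmem θ (fun x => l (φ x))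
        (fun x a => rfl)
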